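/- Let k be a commutative ring and A an associative unital k-algebra which is finitely generated and projective as a k-module. Then A is a Frobenius algebra (i.e. there exists a k-linear isomorphism φ: A → Hom_k(A,k) satisfying φ(ab)(x) = φ(b)(xa) for all a,b,x ∈ A) if and only if there exist R ∈ End_k(A)⊗End_k(A) and a k-linear map ε: End_k(A) → k such that (i) R is a solution of the FS-equation R¹²R²³ = R²³R¹³ = R¹³R¹² in End_k(A)⊗End_k(A)⊗End_k(A), (ii) the normalizing Frobenius condition (ε⊗I)(R) = (I⊗ε)(R) = I_A holds (i.e. Σ ε(R¹)R² = Σ R¹ε(R²) = I_A in End_k(A)), and (iii) there is a k-algebra isomorphism A ≅ A(R), where A(R) := {f ∈ End_k(A) | (f⊗1)·R = R·(1⊗f) in End_k(A)⊗End_k(A)}. -/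

import Mathlib

open TensorProduct

variable {k B : Type*} [CommRing k] [Ring B] [Algebra k B]

/-- The map `B ⊗ B → B ⊗ B ⊗ B`, `x ⊗ y ↦ x ⊗ y ⊗ 1`. -/
noncomputable def leg12 : B ⊗[k] B →ₐ[k] B ⊗[k] (B ⊗[k] B) :=
  Algebra.TensorProduct.map (AlgHom.id k B) Algebra.TensorProduct.includeLeft

/-- The map `B ⊗ B → B ⊗ B ⊗ B`, `x ⊗ y ↦ x ⊗ 1 ⊗ y`. -/
noncomputable def leg13 : B ⊗[k] B →ₐ[k] B ⊗[k] (B ⊗[k] B) :=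
  Algebra.TensorProduct.map (AlgHom.id k B) Algebra.TensorProduct.includeRight

/-- The map `B ⊗ B → B ⊗ B ⊗ B`, `x ⊗ y ↦ 1 ⊗ x ⊗ y`. -/
noncomputable def leg23 : B ⊗[k] B →ₐ[k] B ⊗[k] (B ⊗[k] B) :=
  Algebra.TensorProduct.includeRight

@[simp] lemma leg12_tmul (x y : B) :
    (leg12 (x ⊗ₜ[k] y) : B ⊗[k] (B ⊗[k] B)) = x ⊗ₜ (y ⊗ₜ 1) := by
  simp [leg12]

@[simp] lemma leg13_tmul (x y : B) :
    (leg13 (x ⊗ₜ[k] y) : B ⊗[k] (B ⊗[k] B)) = x ⊗ₜ (1 ⊗ₜ y) := by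
  simp [leg13]

@[simp] lemma leg23_tmul (x y : B) :
    (leg23 (x ⊗ₜ[k] y) : B ⊗[k] (B ⊗[k] B)) = 1 ⊗ₜ (x ⊗ₜ y) := by
  simp [leg23]

/-- `theta ε (u ⊗ v) = (z ↦ ε (z * u) • v)`. -/
noncomputable def theta (ε : B →ₗ[k] k) : B ⊗[k] B →ₗ[k] (B →ₗ[k] B) :=
  TensorProduct.lift (LinearMap.mk₂ k
    (fun u v => (ε ∘ₗ LinearMap.mulRight k u).smulRight v)
    (by
      intro u u' v; ext z
      simp only [LinearMap.smulRight_apply, LinearMap.comp_apply,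
        LinearMap.mulRight_apply, LinearMap.add_apply]
      rw [mul_add, map_add, add_smul])
    (by
      intro c u v; ext z
      simp only [LinearMap.smulRight_apply, LinearMap.comp_apply,
        LinearMap.mulRight_apply, LinearMap.smul_apply, RingHom.id_apply]
      rw [mul_smul_comm, map_smul, smul_assoc])
    (by
      intro u v v'; ext z
      simp only [LinearMap.smulRight_apply, LinearMap.comp_apply,
        LinearMap.mulRight_apply, LinearMap.add_apply]
      rw [smul_add])
    (by
      intro c u v; ext z
      simp only [LinearMap.smulRight_apply, LinearMap.comp_apply,
        LinearMap.mulRight_apply, LinearMap.smul_apply, RingHom.id_apply]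
      rw [smul_comm]))

@[simp] lemma theta_tmul (ε : B →ₗ[k] k) (u v z : B) :
    theta ε (u ⊗ₜ[k] v) z = ε (z * u) • v := by
  simp only [theta, TensorProduct.lift.tmul, LinearMap.mk₂_apply,
    LinearMap.smulRight_apply, LinearMap.comp_apply, LinearMap.mulRight_apply]

set_option maxHeartbeats 1000000 in
set_option synthInstance.maxHeartbeats 400000 in
theorem fwd_aux
    (k A : Type*) [CommRing k] [Ring A] [Algebra k A]
    [Module.Finite k A] [Module.Projective k A]
    (φ : A ≃ₗ[k] (A →ₗ[k] k)) (hφ : ∀ a b x : A, φ (a * b) x = φ b (x * a)) :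
    (∃ (R : Module.End k A ⊗[k] Module.End k A)
        (ε : Module.End k A →ₗ[k] k),
      (leg12 R * leg23 R = leg23 R * leg13 R ∧
        leg23 R * leg13 R = leg13 R * leg12 R) ∧
      ((TensorProduct.lid k (Module.End k A))
          ((TensorProduct.map ε LinearMap.id) R) = 1 ∧
        (TensorProduct.rid k (Module.End k A))
          ((TensorProduct.map LinearMap.id ε) R) = 1) ∧
      ∃ S : Subalgebra k (Module.End k A),
        (S : Set (Module.End k A)) =
          {f : Module.End k A |
            (f ⊗ₜ[k] (1 : Module.End k A)) * R = R * ((1 : Module.End k A) ⊗ₜ[k] f)} ∧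
        Nonempty (A ≃ₐ[k] S)) := by
  classical
  obtain ⟨n, π, σ, -, -, hπσ⟩ := Module.Finite.exists_comp_eq_id_of_projective k A
  set εA : A →ₗ[k] k := φ 1 with hεA
  have hφ1 : ∀ a x : A, φ a x = εA (x * a) := by
    intro a x
    have := hφ a 1 x
    rwa [mul_one] at this
  set x : Fin n → A := fun i => π (Pi.single i 1) with hx
  set g : Fin n → (A →ₗ[k] k) := fun i => (LinearMap.proj i) ∘ₗ σ with hgdef
  have hdb : ∀ a : A, ∑ i, g i a • x i = a := by
    intro a
    have h1 : σ a = ∑ i, σ a i • (Pi.single i 1 : Fin n → k) := by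
      funext j
      simp [Finset.sum_apply, Pi.single_apply]
    have h2 : π (σ a) = a := LinearMap.congr_fun hπσ a
    have h3 : ∑ i, g i a • x i = π (∑ i, σ a i • (Pi.single i 1 : Fin n → k)) := by
      simp [map_sum, map_smul, hgdef, hx]
    rw [h3, ← h1, h2]
  set f : Fin n → A := fun i => φ.symm (g i) with hf
  have key : ∀ i, φ (f i) = g i := fun i => φ.apply_symm_apply (g i)
  have hg : ∀ i, ∀ y : A, g i y = εA (y * f i) := by
    intro i y
    rw [← key i, hφ1 (f i) y]
  have hL : ∀ c : A, ∑ i, εA (c * f i) • x i = c := by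
    intro c
    calc ∑ i, εA (c * f i) • x i = ∑ i, g i c • x i := by
          simp_rw [hg]
      _ = c := hdb c
  have hRt : ∀ c : A, ∑ i, εA (x i * c) • f i = c := by
    intro c
    apply φ.injective
    apply LinearMap.ext
    intro y
    rw [map_sum]
    simp_rw [map_smul]
    rw [LinearMap.sum_apply]
    have e1 : ∀ i, (εA (x i * c) • φ (f i)) y = g i y * εA (x i * c) := by
      intro i
      rw [LinearMap.smul_apply, key i, smul_eq_mul, mul_comm]
    rw [Finset.sum_congr rfl fun i _ => e1 i]
    have e2 : ∑ i, g i y * εA (x i * c) = εA ((∑ i, g i y • x i) * c) := by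
      rw [Finset.sum_mul, map_sum]
      apply Finset.sum_congr rfl
      intro i _
      rw [smul_mul_assoc, map_smul, smul_eq_mul]
    rw [e2, hdb y]
    exact (hφ1 c y).symm
  have hone1 : ∑ i, εA (f i) • x i = 1 := by
    have := hL 1
    simpa [one_mul] using this
  have hone2 : ∑ i, εA (x i) • f i = 1 := by
    have := hRt 1
    simpa [mul_one] using this
  -- the Casimir property
  set δ : (A →ₗ[k] A) →ₗ[k] A ⊗[k] A :=
    { toFun := fun w => ∑ i, (f i) ⊗ₜ[k] (w (x i)),
      map_add' := by
        intro w w'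
        simp [tmul_add, Finset.sum_add_distrib],
      map_smul' := by
        intro c w
        simp [tmul_smul, Finset.smul_sum] } with hδ
  have hδΘ : ∀ t : A ⊗[k] A, δ (theta εA t) = t := by
    have h : δ ∘ₗ (theta εA) = LinearMap.id := by
      apply TensorProduct.ext'
      intro u v
      simp only [LinearMap.comp_apply, LinearMap.id_apply, hδ, LinearMap.coe_mk,
        AddHom.coe_mk]
      have e1 : ∀ i, (f i) ⊗ₜ[k] (theta εA (u ⊗ₜ v) (x i)) = εA (x i * u) • ((f i) ⊗ₜ[k] v) := by
        intro i
        rw [theta_tmul, tmul_smul]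
      rw [Finset.sum_congr rfl fun i _ => e1 i]
      have e2 : ∑ i, εA (x i * u) • ((f i) ⊗ₜ[k] v) = (∑ i, εA (x i * u) • f i) ⊗ₜ[k] v := by
        rw [sum_tmul]
        exact Finset.sum_congr rfl fun i _ => (smul_tmul' _ _ _).symm
      rw [e2, hRt]
    intro t
    exact LinearMap.congr_fun h t
  have hCas : ∀ a : A, ∑ i, (a * f i) ⊗ₜ[k] (x i) = ∑ i, (f i) ⊗ₜ[k] (x i * a) := by
    intro a
    have hΘeq : theta εA (∑ i, (a * f i) ⊗ₜ[k] (x i))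
        = theta εA (∑ i, (f i) ⊗ₜ[k] (x i * a)) := by
      apply LinearMap.ext
      intro z
      rw [map_sum, map_sum, LinearMap.sum_apply, LinearMap.sum_apply]
      have e1 : ∀ i, theta εA ((a * f i) ⊗ₜ[k] (x i)) z = εA ((z * a) * f i) • x i := by
        intro i; rw [theta_tmul, mul_assoc]
      have e2 : ∀ i, theta εA ((f i) ⊗ₜ[k] (x i * a)) z = εA (z * f i) • (x i * a) := by
        intro i; rw [theta_tmul]
      rw [Finset.sum_congr rfl fun i _ => e1 i, Finset.sum_congr rfl fun i _ => e2 i]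
      rw [hL (z * a)]
      have e3 : ∑ i, εA (z * f i) • (x i * a) = (∑ i, εA (z * f i) • x i) * a := by
        rw [Finset.sum_mul]
        exact Finset.sum_congr rfl fun i _ => (smul_mul_assoc _ _ _).symm
      rw [e3, hL z]
    calc ∑ i, (a * f i) ⊗ₜ[k] (x i) = δ (theta εA (∑ i, (a * f i) ⊗ₜ[k] (x i))) := (hδΘ _).symm
      _ = δ (theta εA (∑ i, (f i) ⊗ₜ[k] (x i * a))) := by rw [hΘeq]
      _ = ∑ i, (f i) ⊗ₜ[k] (x i * a) := hδΘ _
  -- now move to End(A)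
  set L : A →ₐ[k] Module.End k A := Algebra.lmul k A with hLdef
  set p : Fin n → Module.End k A := fun i => L (f i) with hp
  set q : Fin n → Module.End k A := fun i => L (x i) with hq
  set R : Module.End k A ⊗[k] Module.End k A := ∑ i, (p i) ⊗ₜ[k] (q i) with hR
  set εE : Module.End k A →ₗ[k] k :=
    εA ∘ₗ ((LinearMap.applyₗ (1 : A)) : Module.End k A →ₗ[k] A) with hεE
  have hεEapp : ∀ u : Module.End k A, εE u = εA (u 1) := fun u => rfl
  have hCasE : ∀ a : A, ∑ i, (L a * p i) ⊗ₜ[k] (q i) = ∑ i, (p i) ⊗ₜ[k] (q i * L a) := by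
    intro a
    have h := congrArg (Algebra.TensorProduct.map L L) (hCas a)
    rw [map_sum, map_sum] at h
    simpa only [Algebra.TensorProduct.map_tmul, map_mul, hp, hq] using h
  have hqL : ∀ i, L (x i) = q i := fun _ => rfl
  have hpL : ∀ i, L (f i) = p i := fun _ => rfl
  have expand1 : leg12 R * leg23 R
      = ∑ i, ∑ j, (p i) ⊗ₜ[k] ((q i * p j) ⊗ₜ[k] (q j)) := by
    rw [hR, map_sum, map_sum, Finset.sum_mul_sum]
    apply Finset.sum_congr rfl; intro i _
    apply Finset.sum_congr rfl; intro j _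
    simp [Algebra.TensorProduct.tmul_mul_tmul]
  have expand2 : leg23 R * leg13 R
      = ∑ i, ∑ j, (p j) ⊗ₜ[k] ((p i) ⊗ₜ[k] (q i * q j)) := by
    rw [hR, map_sum, map_sum, Finset.sum_mul_sum]
    apply Finset.sum_congr rfl; intro i _
    apply Finset.sum_congr rfl; intro j _
    simp [Algebra.TensorProduct.tmul_mul_tmul]
  have expand3 : leg13 R * leg12 R
      = ∑ i, ∑ j, ((p i * p j)) ⊗ₜ[k] ((q j) ⊗ₜ[k] (q i)) := by
    rw [hR, map_sum, map_sum, Finset.sum_mul_sum]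
    apply Finset.sum_congr rfl; intro i _
    apply Finset.sum_congr rfl; intro j _
    simp [Algebra.TensorProduct.tmul_mul_tmul]
  have estep1 : ∀ i, ∑ j, (p i) ⊗ₜ[k] ((q i * p j) ⊗ₜ[k] (q j))
      = ∑ j, (p i) ⊗ₜ[k] ((p j) ⊗ₜ[k] (q j * q i)) := by
    intro i
    have h := congrArg
      ((TensorProduct.mk k (Module.End k A) (Module.End k A ⊗[k] Module.End k A)) (p i))
      (hCasE (x i))
    rw [map_sum, map_sum] at h
    simp only [TensorProduct.mk_apply, hqL] at h
    exact h
  have estep2 : ∀ i, ∑ j, ((p i * p j)) ⊗ₜ[k] ((q j) ⊗ₜ[k] (q i))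
      = ∑ j, (p j) ⊗ₜ[k] ((q j * p i) ⊗ₜ[k] (q i)) := by
    intro i
    have h := congrArg
      (TensorProduct.map (LinearMap.id : Module.End k A →ₗ[k] Module.End k A)
        ((TensorProduct.mk k (Module.End k A) (Module.End k A)).flip (q i)))
      (hCasE (f i))
    rw [map_sum, map_sum] at h
    simp only [TensorProduct.map_tmul, LinearMap.id_apply, LinearMap.flip_apply,
      TensorProduct.mk_apply, hpL] at h
    exact h
  have goal1 : leg12 R * leg23 R = leg23 R * leg13 R := by
    rw [expand1, expand2, Finset.sum_congr rfl (fun i _ => estep1 i), Finset.sum_comm]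
  have goal2 : leg23 R * leg13 R = leg13 R * leg12 R := by
    have h : leg13 R * leg12 R = leg23 R * leg13 R := by
      rw [expand3, Finset.sum_congr rfl (fun i _ => estep2 i), Finset.sum_comm,
        ← expand1, goal1]
    exact h.symm
  -- normalization
  have hnorm1 : (TensorProduct.lid k (Module.End k A))
      ((TensorProduct.map εE LinearMap.id) R) = 1 := by
    rw [hR, map_sum, map_sum]
    have e : ∀ i, (TensorProduct.lid k (Module.End k A))
        ((TensorProduct.map εE LinearMap.id) ((p i) ⊗ₜ[k] (q i))) = εA (f i) • q i := by
      intro i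
      rw [TensorProduct.map_tmul, TensorProduct.lid_tmul, LinearMap.id_apply]
      congr 1
      rw [hεEapp]
      congr 1
      exact mul_one (f i)
    rw [Finset.sum_congr rfl fun i _ => e i]
    have e2 : ∑ i, εA (f i) • q i = L (∑ i, εA (f i) • x i) := by
      rw [map_sum]
      exact Finset.sum_congr rfl fun i _ => by rw [map_smul, hqL]
    rw [e2, hone1, map_one]
  have hnorm2 : (TensorProduct.rid k (Module.End k A))
      ((TensorProduct.map LinearMap.id εE) R) = 1 := by
    rw [hR, map_sum, map_sum]
    have e : ∀ i, (TensorProduct.rid k (Module.End k A))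
        ((TensorProduct.map LinearMap.id εE) ((p i) ⊗ₜ[k] (q i))) = εA (x i) • p i := by
      intro i
      rw [TensorProduct.map_tmul, TensorProduct.rid_tmul, LinearMap.id_apply]
      congr 1
      rw [hεEapp]
      congr 1
      exact mul_one (x i)
    rw [Finset.sum_congr rfl fun i _ => e i]
    have e2 : ∑ i, εA (x i) • p i = L (∑ i, εA (x i) • f i) := by
      rw [map_sum]
      exact Finset.sum_congr rfl fun i _ => by rw [map_smul, hpL]
    rw [e2, hone2, map_one]
  -- the subalgebra
  refine ⟨R, εE, ⟨goal1, goal2⟩, ⟨hnorm1, hnorm2⟩, L.range, ?_, ⟨AlgEquiv.ofInjective L ?_⟩⟩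
  · ext w
    simp only [Set.mem_setOf_eq, SetLike.mem_coe, AlgHom.mem_range]
    constructor
    · rintro ⟨a, rfl⟩
      rw [hR, Finset.mul_sum, Finset.sum_mul]
      have e : ∀ i, (L a ⊗ₜ[k] (1 : Module.End k A)) * ((p i) ⊗ₜ[k] (q i))
          = (L a * p i) ⊗ₜ[k] (q i) := by
        intro i
        rw [Algebra.TensorProduct.tmul_mul_tmul, one_mul]
      have e' : ∀ i, ((p i) ⊗ₜ[k] (q i)) * ((1 : Module.End k A) ⊗ₜ[k] (L a))
          = (p i) ⊗ₜ[k] (q i * L a) := by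
        intro i
        rw [Algebra.TensorProduct.tmul_mul_tmul, mul_one]
      rw [Finset.sum_congr rfl fun i _ => e i, Finset.sum_congr rfl fun i _ => e' i]
      exact hCasE a
    · intro hw
      set ΛE : Module.End k A ⊗[k] Module.End k A →ₗ[k] Module.End k A :=
        (TensorProduct.lid k (Module.End k A)).toLinearMap ∘ₗ
          TensorProduct.map εE LinearMap.id with hΛE
      have hΛEt : ∀ u v : Module.End k A, ΛE (u ⊗ₜ[k] v) = εE u • v := by
        intro u v
        simp [hΛE]
      have h1 := congrArg ΛE hw
      have lhs1 : ΛE ((w ⊗ₜ[k] (1 : Module.End k A)) * R) = L (∑ i, εA (w (f i)) • x i) := by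
        rw [hR, Finset.mul_sum, map_sum, map_sum]
        apply Finset.sum_congr rfl
        intro i _
        rw [Algebra.TensorProduct.tmul_mul_tmul, one_mul, hΛEt, map_smul, hqL]
        congr 1
        rw [hεEapp]
        congr 1
        show w (L (f i) 1) = w (f i)
        congr 1
        show f i * 1 = f i
        exact mul_one (f i)
      have rhs1 : ΛE (R * ((1 : Module.End k A) ⊗ₜ[k] w)) = w := by
        rw [hR, Finset.sum_mul, map_sum]
        have e : ∀ i, ΛE (((p i) ⊗ₜ[k] (q i)) * ((1 : Module.End k A) ⊗ₜ[k] w))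
            = εA (f i) • (q i * w) := by
          intro i
          rw [Algebra.TensorProduct.tmul_mul_tmul, mul_one, hΛEt]
          congr 1
          rw [hεEapp]
          congr 1
          exact mul_one (f i)
        rw [Finset.sum_congr rfl fun i _ => e i]
        have e2 : ∑ i, εA (f i) • (q i * w) = (∑ i, εA (f i) • q i) * w := by
          rw [Finset.sum_mul]
          exact Finset.sum_congr rfl fun i _ => (smul_mul_assoc _ _ _).symm
        have e3 : ∑ i, εA (f i) • q i = L (∑ i, εA (f i) • x i) := by
          rw [map_sum]
          exact Finset.sum_congr rfl fun i _ => by rw [map_smul, hqL]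
        rw [e2, e3, hone1, map_one, one_mul]
      rw [lhs1, rhs1] at h1
      exact ⟨_, h1⟩
  · exact fun a b hab => by
      have : L a 1 = L b 1 := by rw [hab]
      simpa [hLdef] using this


/-- `lam ε (u ⊗ v) = ε u • v`. -/
noncomputable def lam (ε : B →ₗ[k] k) : B ⊗[k] B →ₗ[k] B :=
  (TensorProduct.lid k B).toLinearMap ∘ₗ TensorProduct.map ε LinearMap.id

/-- `rho ε (u ⊗ v) = ε v • u`. -/
noncomputable def rho (ε : B →ₗ[k] k) : B ⊗[k] B →ₗ[k] B :=
  (TensorProduct.rid k B).toLinearMap ∘ₗ TensorProduct.map LinearMap.id ε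

@[simp] lemma lam_tmul (ε : B →ₗ[k] k) (u v : B) : lam ε (u ⊗ₜ[k] v) = ε u • v := by
  simp [lam]

@[simp] lemma rho_tmul (ε : B →ₗ[k] k) (u v : B) : rho ε (u ⊗ₜ[k] v) = ε v • u := by
  simp [rho]

lemma lam_mul_right (ε : B →ₗ[k] k) (f : B) (x : B ⊗[k] B) :
    lam ε (x * ((1 : B) ⊗ₜ[k] f)) = lam ε x * f := by
  induction x using TensorProduct.induction_on with
  | zero => simp
  | tmul a b => simp [Algebra.TensorProduct.tmul_mul_tmul, smul_mul_assoc]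
  | add x y hx hy => rw [add_mul, map_add, map_add, add_mul, hx, hy]

lemma rho_mul_left (ε : B →ₗ[k] k) (f : B) (x : B ⊗[k] B) :
    rho ε (((f : B) ⊗ₜ[k] (1 : B)) * x) = f * rho ε x := by
  induction x using TensorProduct.induction_on with
  | zero => simp
  | tmul a b => simp [Algebra.TensorProduct.tmul_mul_tmul, mul_smul_comm]
  | add x y hx hy => rw [mul_add, map_add, map_add, mul_add, hx, hy]

section maps
variable (ε : B →ₗ[k] k) (f : B)

/-- contract first leg of `B ⊗ B ⊗ B` with `u ↦ ε (f * u)`. -/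
noncomputable def vmap : B ⊗[k] (B ⊗[k] B) →ₗ[k] B ⊗[k] B :=
  (TensorProduct.lid k (B ⊗[k] B)).toLinearMap ∘ₗ
    TensorProduct.map (ε ∘ₗ LinearMap.mulLeft k f) LinearMap.id

@[simp] lemma vmap_tmul (a : B) (t : B ⊗[k] B) :
    vmap ε f (a ⊗ₜ[k] t) = ε (f * a) • t := by
  simp [vmap]

/-- contract third leg of `B ⊗ B ⊗ B` with `v ↦ ε (v * f)`. -/
noncomputable def wmap : B ⊗[k] (B ⊗[k] B) →ₗ[k] B ⊗[k] B :=
  TensorProduct.map LinearMap.id (rho ε ∘ₗ LinearMap.mulRight k ((1 : B) ⊗ₜ[k] f))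

@[simp] lemma wmap_tmul (a u v : B) :
    wmap ε f (a ⊗ₜ[k] (u ⊗ₜ[k] v)) = ε (v * f) • (a ⊗ₜ[k] u) := by
  simp [wmap, Algebra.TensorProduct.tmul_mul_tmul, tmul_smul]

/-- contract middle leg of `B ⊗ B ⊗ B` with `ε`. -/
noncomputable def mmap : B ⊗[k] (B ⊗[k] B) →ₗ[k] B ⊗[k] B :=
  TensorProduct.map LinearMap.id (lam ε)

@[simp] lemma mmap_tmul (a u v : B) :
    mmap ε (a ⊗ₜ[k] (u ⊗ₜ[k] v)) = ε u • (a ⊗ₜ[k] v) := by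
  simp [mmap, tmul_smul]

end maps

lemma CL1 (ε : B →ₗ[k] k) (f : B) (x y : B ⊗[k] B) :
    vmap ε f (leg12 x * leg23 y) = ((lam ε ((f ⊗ₜ[k] (1 : B)) * x)) ⊗ₜ[k] (1 : B)) * y := by
  induction x using TensorProduct.induction_on with
  | zero => simp
  | add x1 x2 h1 h2 => rw [map_add, add_mul, map_add, h1, h2, mul_add, map_add, add_tmul, add_mul]
  | tmul a b =>
    induction y using TensorProduct.induction_on with
    | zero => simp
    | add y1 y2 h1 h2 => rw [map_add, mul_add, map_add, h1, h2, mul_add]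
    | tmul c d =>
      simp [Algebra.TensorProduct.tmul_mul_tmul, smul_tmul', smul_mul_assoc]

lemma CL2 (ε : B →ₗ[k] k) (f : B) (x y : B ⊗[k] B) :
    vmap ε f (leg23 x * leg13 y) = x * ((1 : B) ⊗ₜ[k] (lam ε ((f ⊗ₜ[k] (1 : B)) * y))) := by
  induction x using TensorProduct.induction_on with
  | zero => simp
  | add x1 x2 h1 h2 => rw [map_add, add_mul, map_add, h1, h2, add_mul]
  | tmul a b =>
    induction y using TensorProduct.induction_on with
    | zero => simp
    | add y1 y2 h1 h2 =>
      rw [map_add, mul_add, map_add, h1, h2, mul_add, map_add, tmul_add, mul_add]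
    | tmul c d =>
      simp [Algebra.TensorProduct.tmul_mul_tmul, tmul_smul, mul_smul_comm]

lemma CL3 (ε : B →ₗ[k] k) (f : B) (x y : B ⊗[k] B) :
    wmap ε f (leg12 x * leg23 y) = x * ((1 : B) ⊗ₜ[k] (rho ε (y * ((1 : B) ⊗ₜ[k] f)))) := by
  induction x using TensorProduct.induction_on with
  | zero => simp
  | add x1 x2 h1 h2 => rw [map_add, add_mul, map_add, h1, h2, add_mul]
  | tmul a b =>
    induction y using TensorProduct.induction_on with
    | zero => simp
    | add y1 y2 h1 h2 =>
      rw [map_add, mul_add, map_add, h1, h2, add_mul, map_add, tmul_add, mul_add]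
    | tmul c d =>
      simp [Algebra.TensorProduct.tmul_mul_tmul, tmul_smul, mul_smul_comm]

lemma CL4 (ε : B →ₗ[k] k) (f : B) (x y : B ⊗[k] B) :
    wmap ε f (leg13 x * leg12 y) = ((rho ε (x * ((1 : B) ⊗ₜ[k] f))) ⊗ₜ[k] (1 : B)) * y := by
  induction x using TensorProduct.induction_on with
  | zero => simp
  | add x1 x2 h1 h2 =>
    rw [map_add, add_mul, map_add, h1, h2, add_mul, map_add, add_tmul, add_mul]
  | tmul a b =>
    induction y using TensorProduct.induction_on with
    | zero => simp
    | add y1 y2 h1 h2 => rw [map_add, mul_add, map_add, h1, h2, mul_add]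
    | tmul c d =>
      simp [Algebra.TensorProduct.tmul_mul_tmul, smul_tmul', smul_mul_assoc]

lemma CL5 (ε : B →ₗ[k] k) (x y : B ⊗[k] B) :
    mmap ε (leg23 x * leg13 y) = ((1 : B) ⊗ₜ[k] (lam ε x)) * y := by
  induction x using TensorProduct.induction_on with
  | zero => simp
  | add x1 x2 h1 h2 =>
    rw [map_add, add_mul, map_add, h1, h2, map_add, tmul_add, add_mul]
  | tmul a b =>
    induction y using TensorProduct.induction_on with
    | zero => simp
    | add y1 y2 h1 h2 => rw [map_add, mul_add, map_add, h1, h2, mul_add]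
    | tmul c d =>
      simp [Algebra.TensorProduct.tmul_mul_tmul, tmul_smul, smul_tmul', mul_smul_comm, smul_mul_assoc]

lemma CL6a (ε : B →ₗ[k] k) (x y : B ⊗[k] B) :
    mmap ε (leg12 x * leg23 y) =
      TensorProduct.map LinearMap.id
        (lam ε ∘ₗ LinearMap.mulRight k y ∘ₗ (TensorProduct.mk k B B).flip 1) x := by
  induction x using TensorProduct.induction_on with
  | zero => simp
  | add x1 x2 h1 h2 => rw [map_add, add_mul, map_add, h1, h2, map_add]
  | tmul a b =>
    induction y using TensorProduct.induction_on with
    | zero => simp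
    | add y1 y2 h1 h2 =>
      rw [map_add, mul_add, map_add, h1, h2]
      simp only [TensorProduct.map_tmul, LinearMap.comp_apply, LinearMap.flip_apply,
        TensorProduct.mk_apply, LinearMap.mulRight_apply, LinearMap.id_apply]
      rw [mul_add, map_add, tmul_add]
    | tmul c d =>
      simp [Algebra.TensorProduct.tmul_mul_tmul, tmul_smul]

lemma CL6b (ε : B →ₗ[k] k) (x y : B ⊗[k] B) :
    mmap ε (leg12 x * leg23 y) =
      TensorProduct.map
        (rho ε ∘ₗ LinearMap.mulLeft k x ∘ₗ TensorProduct.mk k B B 1) LinearMap.id y := by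
  induction y using TensorProduct.induction_on with
  | zero => simp
  | add y1 y2 h1 h2 => rw [map_add, mul_add, map_add, h1, h2, map_add]
  | tmul c d =>
    induction x using TensorProduct.induction_on with
    | zero => simp
    | add x1 x2 h1 h2 =>
      rw [map_add, add_mul, map_add, h1, h2]
      simp only [TensorProduct.map_tmul, LinearMap.comp_apply,
        TensorProduct.mk_apply, LinearMap.mulLeft_apply, LinearMap.id_apply]
      rw [add_mul, map_add, add_tmul]
    | tmul a b =>
      simp [Algebra.TensorProduct.tmul_mul_tmul, smul_tmul']

set_option maxHeartbeats 1000000 in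
set_option synthInstance.maxHeartbeats 400000 in
theorem conv_aux {A : Type*} [Ring A] [Algebra k A]
    (R : B ⊗[k] B) (ε : B →ₗ[k] k)
    (h1 : leg12 R * leg23 R = leg23 R * leg13 R)
    (h2 : leg23 R * leg13 R = leg13 R * leg12 R)
    (hε1 : (TensorProduct.lid k B) ((TensorProduct.map ε LinearMap.id) R) = 1)
    (hε2 : (TensorProduct.rid k B) ((TensorProduct.map LinearMap.id ε) R) = 1)
    (S : Subalgebra k B)
    (hS : (S : Set B) = {f : B | (f ⊗ₜ[k] (1 : B)) * R = R * ((1 : B) ⊗ₜ[k] f)})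
    (α : A ≃ₐ[k] S) :
    ∃ φ : A ≃ₗ[k] (A →ₗ[k] k), ∀ a b x : A, φ (a * b) x = φ b (x * a) := by
  classical
  have hlamR : lam ε R = 1 := by simpa [lam] using hε1
  have hrhoR : rho ε R = 1 := by simpa [rho] using hε2
  have hmem : ∀ f : B, f ∈ S ↔ (f ⊗ₜ[k] (1 : B)) * R = R * ((1 : B) ⊗ₜ[k] f) := by
    intro f
    rw [← SetLike.mem_coe, hS]
    rfl
  have D1 : ∀ f : B, (f ⊗ₜ[k] (1 : B)) * R = R * ((1 : B) ⊗ₜ[k] f) →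
      lam ε ((f ⊗ₜ[k] (1 : B)) * R) = f := by
    intro f hf
    rw [hf, lam_mul_right, hlamR, one_mul]
  have D2 : ∀ f : B, (f ⊗ₜ[k] (1 : B)) * R = R * ((1 : B) ⊗ₜ[k] f) →
      rho ε (R * ((1 : B) ⊗ₜ[k] f)) = f := by
    intro f hf
    rw [← hf, rho_mul_left, hrhoR, mul_one]
  set Qmap : B →ₗ[k] B :=
    lam ε ∘ₗ LinearMap.mulRight k R ∘ₗ (TensorProduct.mk k B B).flip 1 with hQmap
  set Pmap : B →ₗ[k] B :=
    rho ε ∘ₗ LinearMap.mulLeft k R ∘ₗ TensorProduct.mk k B B 1 with hPmap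
  have hQapp : ∀ f : B, Qmap f = lam ε ((f ⊗ₜ[k] (1 : B)) * R) := fun f => rfl
  have hPapp : ∀ f : B, Pmap f = rho ε (R * ((1 : B) ⊗ₜ[k] f)) := fun f => rfl
  have h12 : leg12 R * leg23 R = leg13 R * leg12 R := h1.trans h2
  have hQmem : ∀ f : B, Qmap f ∈ S := by
    intro f
    rw [hmem, hQapp]
    calc (lam ε ((f ⊗ₜ[k] (1:B)) * R) ⊗ₜ[k] (1:B)) * R
        = vmap ε f (leg12 R * leg23 R) := (CL1 ε f R R).symm
      _ = vmap ε f (leg23 R * leg13 R) := by rw [h1]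
      _ = R * ((1:B) ⊗ₜ[k] lam ε ((f ⊗ₜ[k] (1:B)) * R)) := CL2 ε f R R
  have hPmem : ∀ f : B, Pmap f ∈ S := by
    intro f
    rw [hmem, hPapp]
    calc (rho ε (R * ((1:B) ⊗ₜ[k] f)) ⊗ₜ[k] (1:B)) * R
        = wmap ε f (leg13 R * leg12 R) := (CL4 ε f R R).symm
      _ = wmap ε f (leg12 R * leg23 R) := by rw [← h12]
      _ = R * ((1:B) ⊗ₜ[k] rho ε (R * ((1:B) ⊗ₜ[k] f))) := CL3 ε f R R
  have hone : ((1:B) ⊗ₜ[k] (1:B) : B ⊗[k] B) = 1 := rfl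
  have hQR : TensorProduct.map LinearMap.id Qmap R = R := by
    calc TensorProduct.map LinearMap.id Qmap R
        = mmap ε (leg12 R * leg23 R) := (CL6a ε R R).symm
      _ = mmap ε (leg23 R * leg13 R) := by rw [h1]
      _ = ((1:B) ⊗ₜ[k] lam ε R) * R := CL5 ε R R
      _ = R := by rw [hlamR, hone, one_mul]
  have hPR : TensorProduct.map Pmap LinearMap.id R = R := by
    calc TensorProduct.map Pmap LinearMap.id R
        = mmap ε (leg12 R * leg23 R) := (CL6b ε R R).symm
      _ = mmap ε (leg23 R * leg13 R) := by rw [h1]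
      _ = ((1:B) ⊗ₜ[k] lam ε R) * R := CL5 ε R R
      _ = R := by rw [hlamR, hone, one_mul]
  have hPQR : TensorProduct.map Pmap Qmap R = R := by
    have hcomp : TensorProduct.map Pmap Qmap
        = (TensorProduct.map Pmap LinearMap.id).comp (TensorProduct.map LinearMap.id Qmap) := by
      rw [← TensorProduct.map_comp, LinearMap.comp_id, LinearMap.id_comp]
    rw [hcomp, LinearMap.comp_apply, hQR, hPR]
  -- move to the subalgebra S
  set Sm : Submodule k B := Subalgebra.toSubmodule S with hSm
  set P' : B →ₗ[k] Sm := Pmap.codRestrict Sm (fun f => hPmem f) with hP'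
  set Q' : B →ₗ[k] Sm := Qmap.codRestrict Sm (fun f => hQmem f) with hQ'
  set e : Sm ⊗[k] Sm := TensorProduct.map P' Q' R with he
  have hιe : TensorProduct.map Sm.subtype Sm.subtype e = R := by
    rw [he, ← LinearMap.comp_apply, ← TensorProduct.map_comp,
      LinearMap.subtype_comp_codRestrict, LinearMap.subtype_comp_codRestrict, hPQR]
  -- the Frobenius form on S
  set Phi : Sm →ₗ[k] (Sm →ₗ[k] k) :=
    LinearMap.mk₂ k (fun s x => ε ((x : B) * (s : B)))
      (by intro s s' x; simp [mul_add])
      (by intro c s x; simp [mul_smul_comm])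
      (by intro s x x'; simp [add_mul])
      (by intro c s x; simp [smul_mul_assoc])
    with hPhi
  have hPhiApp : ∀ s x : Sm, Phi s x = ε ((x : B) * (s : B)) := fun s x => rfl
  set Psi : (Sm →ₗ[k] k) →ₗ[k] Sm :=
    { toFun := fun l => (TensorProduct.rid k Sm) (TensorProduct.map LinearMap.id l e),
      map_add' := by
        intro l l'
        show (TensorProduct.rid k Sm) (TensorProduct.map LinearMap.id (l + l') e)
          = (TensorProduct.rid k Sm) (TensorProduct.map LinearMap.id l e)
            + (TensorProduct.rid k Sm) (TensorProduct.map LinearMap.id l' e)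
        rw [TensorProduct.map_add_right, LinearMap.add_apply, map_add]
      map_smul' := by
        intro c l
        show (TensorProduct.rid k Sm) (TensorProduct.map LinearMap.id (c • l) e)
          = c • (TensorProduct.rid k Sm) (TensorProduct.map LinearMap.id l e)
        rw [TensorProduct.map_smul_right, LinearMap.smul_apply, map_smul] }
    with hPsi
  have hPsiApp : ∀ l, Psi l = (TensorProduct.rid k Sm) (TensorProduct.map LinearMap.id l e) :=
    fun l => rfl
  have hmemS : ∀ s : Sm, ((s : B) ⊗ₜ[k] (1 : B)) * R = R * ((1 : B) ⊗ₜ[k] (s : B)) := by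
    intro s
    exact (hmem (s : B)).mp s.2
  have K1 : ∀ s : Sm, Psi (Phi s) = s := by
    intro s
    apply Subtype.coe_injective
    have cl1 : ∀ t : Sm ⊗[k] Sm,
        ((((TensorProduct.rid k Sm) (TensorProduct.map LinearMap.id (Phi s) t)) : Sm) : B)
          = rho ε ((TensorProduct.map Sm.subtype Sm.subtype t) * ((1 : B) ⊗ₜ[k] (s : B))) := by
      intro t
      induction t using TensorProduct.induction_on with
      | zero => simp
      | add t1 t2 ht1 ht2 =>
        rw [map_add, map_add, Submodule.coe_add, ht1, ht2, map_add, add_mul, map_add]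
      | tmul u v =>
        rw [TensorProduct.map_tmul, LinearMap.id_apply, TensorProduct.rid_tmul,
          Submodule.coe_smul, TensorProduct.map_tmul, Submodule.subtype_apply,
          Submodule.subtype_apply, Algebra.TensorProduct.tmul_mul_tmul, mul_one,
          rho_tmul, hPhiApp]
    show (((Psi (Phi s) : Sm)) : B) = ((s : Sm) : B)
    rw [hPsiApp, cl1 e, hιe]
    exact D2 (s : B) (hmemS s)
  have K2 : ∀ l : Sm →ₗ[k] k, Phi (Psi l) = l := by
    intro l
    apply LinearMap.ext
    intro x
    set sx : Sm ⊗[k] Sm →ₗ[k] Sm :=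
      (TensorProduct.lid k Sm).toLinearMap ∘ₗ
        TensorProduct.map (ε ∘ₗ LinearMap.mulLeft k (x : B) ∘ₗ Sm.subtype) LinearMap.id
      with hsx
    have cl2 : ∀ t : Sm ⊗[k] Sm,
        ε ((x : B) * ((((TensorProduct.rid k Sm) (TensorProduct.map LinearMap.id l t)) : Sm) : B))
          = l (sx t) := by
      intro t
      induction t using TensorProduct.induction_on with
      | zero => simp [hsx]
      | add t1 t2 ht1 ht2 =>
        rw [map_add, map_add, Submodule.coe_add, mul_add, map_add, ht1, ht2, map_add,
          map_add]
      | tmul u v =>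
        rw [TensorProduct.map_tmul, LinearMap.id_apply, TensorProduct.rid_tmul,
          Submodule.coe_smul, mul_smul_comm, map_smul, hsx]
        simp only [LinearMap.comp_apply, TensorProduct.map_tmul, LinearMap.id_apply,
          LinearEquiv.coe_coe, Submodule.subtype_apply, LinearMap.mulLeft_apply]
        rw [TensorProduct.lid_tmul, map_smul, smul_eq_mul, smul_eq_mul]
        exact mul_comm _ _
    have cl3 : (sx e : B) = (x : B) := by
      have cl3' : ∀ t : Sm ⊗[k] Sm,
          ((sx t : Sm) : B)
            = lam ε (((x : B) ⊗ₜ[k] (1 : B)) * (TensorProduct.map Sm.subtype Sm.subtype t)) := by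
        intro t
        induction t using TensorProduct.induction_on with
        | zero => simp [hsx]
        | add t1 t2 ht1 ht2 =>
          rw [map_add, Submodule.coe_add, ht1, ht2, map_add, mul_add, map_add]
        | tmul u v =>
          rw [hsx]
          simp only [LinearMap.comp_apply, TensorProduct.map_tmul, LinearMap.id_apply,
            LinearEquiv.coe_coe, Submodule.subtype_apply, LinearMap.mulLeft_apply]
          rw [TensorProduct.lid_tmul, Submodule.coe_smul, Algebra.TensorProduct.tmul_mul_tmul,
            one_mul, lam_tmul]
      rw [cl3' e, hιe]
      exact D1 (x : B) (hmemS x)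
    have : Phi (Psi l) x = ε ((x : B) * ((Psi l : Sm) : B)) := hPhiApp _ _
    rw [this, hPsiApp, cl2 e]
    congr 1
    exact Subtype.coe_injective cl3
  set PhiE : Sm ≃ₗ[k] (Sm →ₗ[k] k) :=
    LinearEquiv.ofLinear Phi Psi (LinearMap.ext K2) (LinearMap.ext K1) with hPhiE
  set aL : A ≃ₗ[k] Sm := α.toLinearEquiv with haL
  refine ⟨aL ≪≫ₗ PhiE ≪≫ₗ aL.dualMap, ?_⟩
  have happ : ∀ c x : A, (aL ≪≫ₗ PhiE ≪≫ₗ aL.dualMap) c x = ε ((α (x * c) : B)) := by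
    intro c x
    rw [LinearEquiv.trans_apply, LinearEquiv.trans_apply, LinearEquiv.dualMap_apply]
    have h1 : PhiE (aL c) = Phi (aL c) := rfl
    rw [h1, hPhiApp]
    congr 1
    have : aL x = α x := rfl
    rw [this]
    have : aL c = α c := rfl
    rw [this]
    rw [← MulMemClass.coe_mul, ← map_mul]
  intro a b x
  rw [happ, happ, mul_assoc]


/-- A finitely generated projective `k`-algebra `A` is Frobenius iff it is
isomorphic to `A(R)` for a solution `R ∈ End_k(A) ⊗ End_k(A)` of the
FS-equation satisfying the normalizing Frobenius condition. -/
theorem frobenius_iff_isomorphic_to_AR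
    (k A : Type*) [CommRing k] [Ring A] [Algebra k A]
    [Module.Finite k A] [Module.Projective k A] :
    (∃ φ : A ≃ₗ[k] (A →ₗ[k] k), ∀ a b x : A, φ (a * b) x = φ b (x * a)) ↔
    (∃ (R : Module.End k A ⊗[k] Module.End k A)
        (ε : Module.End k A →ₗ[k] k),
      (leg12 R * leg23 R = leg23 R * leg13 R ∧
        leg23 R * leg13 R = leg13 R * leg12 R) ∧
      ((TensorProduct.lid k (Module.End k A))
          ((TensorProduct.map ε LinearMap.id) R) = 1 ∧
        (TensorProduct.rid k (Module.End k A))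
          ((TensorProduct.map LinearMap.id ε) R) = 1) ∧
      ∃ S : Subalgebra k (Module.End k A),
        (S : Set (Module.End k A)) =
          {f : Module.End k A |
            (f ⊗ₜ[k] (1 : Module.End k A)) * R = R * ((1 : Module.End k A) ⊗ₜ[k] f)} ∧
        Nonempty (A ≃ₐ[k] S)) := by
  constructor
  · rintro ⟨φ, hφ⟩
    exact fwd_aux k A φ hφ
  · rintro ⟨R, ε, ⟨h1, h2⟩, ⟨hε1, hε2⟩, S, hS, ⟨α⟩⟩
    exact conv_aux R ε h1 h2 hε1 hε2 S hS α
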